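/- Let M be a real 3×3 matrix of the form M_{ij} = ε_{ij}·m_{ij}, where m_{ij} ≥ 0 and ε_{ij} = −1 if exactly one of i, j equals 3 and ε_{ij} = +1 otherwise, and suppose every row sum and every column sum of M equals 1. If for each k ∈ {1,2,3} the triangle inequality √(m_{1k}·m_{2k}) ≤ Σ_{i≠k} √(m_{1i}·m_{2i}) holds, then there exists a matrix P = (p_{ij}) ∈ SU(2,1) with m_{ij} = |p_{ij}|² for all i, j. -/

import Mathlib

open Matrix

/-- The matrix of the Hermitian form of signature (2,1) on ℂ³. -/
def formJ : Matrix (Fin 3) (Fin 3) ℂ := Matrix.diagonal ![1, 1, -1]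

/-- A matrix belongs to SU(2,1) iff it has determinant 1 and preserves the form `formJ`. -/
def SU21 (A : Matrix (Fin 3) (Fin 3) ℂ) : Prop :=
  A.det = 1 ∧ Aᴴ * formJ * A = formJ

/-- The sign `ε i j`, equal to `-1` when exactly one of `i`, `j` is the last index
and `+1` otherwise. -/
def eps (i j : Fin 3) : ℝ := if (i = 2 ↔ j = 2) then 1 else -1

open Complex in
lemma exists_triangle (x : Fin 3 → ℝ) (hx : ∀ j, 0 ≤ x j)
    (h0 : x 0 ≤ x 1 + x 2) (h1 : x 1 ≤ x 0 + x 2) (h2 : x 2 ≤ x 0 + x 1) :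
    ∃ z : Fin 3 → ℂ, (∀ j, Complex.normSq (z j) = x j ^ 2) ∧ z 0 + z 1 = z 2 := by
  classical
  set t : ℝ := if x 0 * x 1 = 0 then 1 else (x 2 ^ 2 - x 0 ^ 2 - x 1 ^ 2) / (2 * (x 0 * x 1)) with ht
  have htsq : t ^ 2 ≤ 1 := by
    rw [ht]; split_ifs with h
    · norm_num
    · have hpos : 0 < x 0 * x 1 := lt_of_le_of_ne (mul_nonneg (hx 0) (hx 1)) (Ne.symm h)
      rw [div_pow, div_le_one (by positivity)]
      nlinarith [mul_nonneg (mul_nonneg (sub_nonneg.2 h2) (sub_nonneg.2 h1)) (sub_nonneg.2 h0),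
        hx 0, hx 1, hx 2, mul_nonneg (hx 0) (hx 1), mul_nonneg (hx 1) (hx 2), mul_nonneg (hx 0) (hx 2)]
  set s : ℝ := Real.sqrt (1 - t ^ 2) with hs
  have hs2 : s ^ 2 = 1 - t ^ 2 := Real.sq_sqrt (by linarith)
  have key : x 0 ^ 2 + 2 * (x 0 * x 1) * t + x 1 ^ 2 = x 2 ^ 2 := by
    rw [ht]; split_ifs with h
    · rcases mul_eq_zero.1 h with h' | h'
      · have : x 1 = x 2 := le_antisymm (by linarith [hx 0]) (by linarith [hx 0])
        nlinarith
      · have : x 0 = x 2 := le_antisymm (by linarith [hx 1]) (by linarith [hx 1])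
        nlinarith
    · have h2x : (2 * (x 0 * x 1)) ≠ 0 := mul_ne_zero two_ne_zero h
      rw [mul_div_assoc', mul_div_cancel_left₀ _ h2x]
      ring
  refine ⟨![(x 0 : ℂ), (x 1 : ℂ) * (t + s * Complex.I),
    (x 0 : ℂ) + (x 1 : ℂ) * (t + s * Complex.I)], ?_, by simp⟩
  intro j
  fin_cases j
  · simp [Complex.normSq_ofReal]; ring
  · simp [Complex.normSq_apply, Complex.mul_re, Complex.mul_im]
    linear_combination (x 1 ^ 2) * hs2
  · simp [Complex.normSq_apply, Complex.add_re, Complex.add_im, Complex.mul_re, Complex.mul_im]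
    linear_combination key + x 1 ^ 2 * hs2

theorem su21_hat_of_triangle_ineq (m : Fin 3 → Fin 3 → ℝ)
    (hm : ∀ i j, 0 ≤ m i j)
    (hrow : ∀ i : Fin 3, ∑ j : Fin 3, eps i j * m i j = 1)
    (hcol : ∀ j : Fin 3, ∑ i : Fin 3, eps i j * m i j = 1)
    (htri : ∀ k : Fin 3, Real.sqrt (m 0 k * m 1 k) ≤
      ∑ i ∈ Finset.univ.erase k, Real.sqrt (m 0 i * m 1 i)) :
    ∃ P : Matrix (Fin 3) (Fin 3) ℂ, SU21 P ∧ ∀ i j, m i j = Complex.normSq (P i j) := by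
  classical
  -- linear equations
  have e0 : m 0 0 + m 0 1 - m 0 2 = 1 := by
    have := hrow 0; simp [eps, Fin.sum_univ_three] at this; linarith
  have e1 : m 1 0 + m 1 1 - m 1 2 = 1 := by
    have := hrow 1; simp [eps, Fin.sum_univ_three] at this; linarith
  have e2 : -m 2 0 - m 2 1 + m 2 2 = 1 := by
    have := hrow 2; simp [eps, Fin.sum_univ_three] at this; linarith
  have f0 : m 0 0 + m 1 0 - m 2 0 = 1 := by
    have := hcol 0; simp [eps, Fin.sum_univ_three] at this; linarith
  have f1 : m 0 1 + m 1 1 - m 2 1 = 1 := by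
    have := hcol 1; simp [eps, Fin.sum_univ_three] at this; linarith
  have f2 : -m 0 2 - m 1 2 + m 2 2 = 1 := by
    have := hcol 2; simp [eps, Fin.sum_univ_three] at this; linarith
  -- square roots
  set a : Fin 3 → ℝ := fun j => Real.sqrt (m 0 j) with hadef
  set b : Fin 3 → ℝ := fun j => Real.sqrt (m 1 j) with hbdef
  set x : Fin 3 → ℝ := fun j => Real.sqrt (m 0 j * m 1 j) with hxdef
  have hxab : ∀ j, x j = a j * b j := fun j => Real.sqrt_mul (hm 0 j) _
  have ha2 : ∀ j, a j ^ 2 = m 0 j := fun j => Real.sq_sqrt (hm 0 j)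
  have hb2 : ∀ j, b j ^ 2 = m 1 j := fun j => Real.sq_sqrt (hm 1 j)
  have hx2 : ∀ j, x j ^ 2 = m 0 j * m 1 j := fun j => Real.sq_sqrt (mul_nonneg (hm 0 j) (hm 1 j))
  have hxnn : ∀ j, 0 ≤ x j := fun j => Real.sqrt_nonneg _
  -- triangle
  have htri' : ∀ k : Fin 3, x k ≤ (x 0 + x 1 + x 2) - x k := by
    intro k
    have := htri k
    rw [Finset.sum_erase_eq_sub (Finset.mem_univ _), Fin.sum_univ_three] at this
    simpa [hxdef] using this
  obtain ⟨z, hz, hzsum⟩ := exists_triangle x hxnn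
    (by have := htri' 0; linarith) (by have := htri' 1; linarith) (by have := htri' 2; linarith)
  -- phases
  set ω : Fin 3 → ℂ := fun j => if x j = 0 then 1 else (starRingEnd ℂ) (z j) / (x j : ℂ) with hωdef
  have k1 : ∀ j, (x j : ℂ) * ω j = (starRingEnd ℂ) (z j) := by
    intro j
    by_cases h : x j = 0
    · have hzj : z j = 0 := by
        rw [← Complex.normSq_eq_zero, hz j, h]; norm_num
      simp [hωdef, h, hzj]
    · simp only [hωdef, if_neg h]
      rw [mul_div_assoc']
      exact mul_div_cancel_left₀ _ (Complex.ofReal_ne_zero.2 h)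
  have k4 : ∀ j, (x j : ℂ) * (starRingEnd ℂ) (ω j) = z j := by
    intro j
    have := congrArg (starRingEnd ℂ) (k1 j)
    simpa [_root_.map_mul, Complex.conj_ofReal, Complex.conj_conj] using this
  have k2 : ∀ j, Complex.normSq (ω j) = 1 := by
    intro j
    by_cases h : x j = 0
    · simp [hωdef, h]
    · simp only [hωdef, if_neg h]
      rw [Complex.normSq_div, Complex.normSq_conj, hz j, Complex.normSq_ofReal]
      field_simp
  -- real-part identities
  have hsymm : ∀ p q : ℂ, (p * (starRingEnd ℂ) q).re = (q * (starRingEnd ℂ) p).re := by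
    intro p q; simp [Complex.mul_re]; ring
  have r01 : 2 * (z 0 * (starRingEnd ℂ) (z 1)).re = x 2 ^ 2 - x 0 ^ 2 - x 1 ^ 2 := by
    have := Complex.normSq_add (z 0) (z 1)
    rw [hzsum, hz 0, hz 1, hz 2] at this
    linarith
  have r02 : 2 * (z 0 * (starRingEnd ℂ) (z 2)).re = x 0 ^ 2 + x 2 ^ 2 - x 1 ^ 2 := by
    have h : (z 0 * (starRingEnd ℂ) (z 2)).re
        = Complex.normSq (z 0) + (z 0 * (starRingEnd ℂ) (z 1)).re := by
      rw [← hzsum, map_add, mul_add, Complex.add_re, Complex.mul_conj]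
      simp
    rw [h, hz 0]; linarith
  have r12 : 2 * (z 1 * (starRingEnd ℂ) (z 2)).re = x 1 ^ 2 + x 2 ^ 2 - x 0 ^ 2 := by
    have h : (z 1 * (starRingEnd ℂ) (z 2)).re
        = (z 0 * (starRingEnd ℂ) (z 1)).re + Complex.normSq (z 1) := by
      rw [← hzsum, map_add, mul_add, Complex.add_re, Complex.mul_conj, hsymm (z 1) (z 0)]
      simp
    rw [h, hz 1]; linarith
  -- rows
  set u : Fin 3 → ℂ := fun j => (a j : ℂ) with hudef
  set v : Fin 3 → ℂ := fun j => (b j : ℂ) * ω j with hvdef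
  set c : Fin 3 → ℂ := ![u 1 * v 2 - u 2 * v 1, u 2 * v 0 - u 0 * v 2, u 0 * v 1 - u 1 * v 0]
    with hcdef
  set w : Fin 3 → ℂ := ![-((starRingEnd ℂ) (c 0)), -((starRingEnd ℂ) (c 1)), (starRingEnd ℂ) (c 2)]
    with hwdef
  -- norms of c
  have hcross : ∀ j k : Fin 3, ((a j * b k : ℝ) : ℂ) * ω k * ((starRingEnd ℂ) (((a k * b j : ℝ) : ℂ) * ω j))
      = z j * (starRingEnd ℂ) (z k) := by
    intro j k
    calc ((a j * b k : ℝ) : ℂ) * ω k * ((starRingEnd ℂ) (((a k * b j : ℝ) : ℂ) * ω j))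
        = ((x j : ℂ) * (starRingEnd ℂ) (ω j)) * ((x k : ℂ) * ω k) := by
          rw [_root_.map_mul, Complex.conj_ofReal]
          push_cast [hxab j, hxab k]
          ring
      _ = z j * (starRingEnd ℂ) (z k) := by rw [k4 j, k1 k]
  have h02 : m 0 2 = m 0 0 + m 0 1 - 1 := by linarith
  have h12 : m 1 2 = m 1 0 + m 1 1 - 1 := by linarith
  have h20 : m 2 0 = m 0 0 + m 1 0 - 1 := by linarith
  have h21 : m 2 1 = m 0 1 + m 1 1 - 1 := by linarith
  have h22 : m 2 2 = m 0 2 + m 1 2 + 1 := by linarith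
  have hnc0 : Complex.normSq (c 0) = m 2 0 := by
    have hC : c 0 = ((a 1 * b 2 : ℝ) : ℂ) * ω 2 - ((a 2 * b 1 : ℝ) : ℂ) * ω 1 := by
      simp [hcdef, hudef, hvdef]; push_cast; ring
    rw [hC, Complex.normSq_sub, Complex.normSq_mul, Complex.normSq_mul,
      Complex.normSq_ofReal, Complex.normSq_ofReal, k2 1, k2 2, hcross 1 2]
    have key : a 1 ^ 2 * b 2 ^ 2 + a 2 ^ 2 * b 1 ^ 2 - (x 1 ^ 2 + x 2 ^ 2 - x 0 ^ 2) = m 2 0 := by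
      rw [ha2 1, ha2 2, hb2 1, hb2 2, hx2 0, hx2 1, hx2 2, h02, h12, h20]; ring
    linear_combination key - r12
  have hnc1 : Complex.normSq (c 1) = m 2 1 := by
    have hC : c 1 = ((a 2 * b 0 : ℝ) : ℂ) * ω 0 - ((a 0 * b 2 : ℝ) : ℂ) * ω 2 := by
      simp [hcdef, hudef, hvdef]; push_cast; ring
    rw [hC, Complex.normSq_sub, Complex.normSq_mul, Complex.normSq_mul,
      Complex.normSq_ofReal, Complex.normSq_ofReal, k2 0, k2 2, hcross 2 0,
      hsymm (z 2) (z 0)]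
    have key : a 2 ^ 2 * b 0 ^ 2 + a 0 ^ 2 * b 2 ^ 2 - (x 0 ^ 2 + x 2 ^ 2 - x 1 ^ 2) = m 2 1 := by
      rw [ha2 0, ha2 2, hb2 0, hb2 2, hx2 0, hx2 1, hx2 2, h02, h12, h21]; ring
    linear_combination key - r02
  have hnc2 : Complex.normSq (c 2) = m 2 2 := by
    have hC : c 2 = ((a 0 * b 1 : ℝ) : ℂ) * ω 1 - ((a 1 * b 0 : ℝ) : ℂ) * ω 0 := by
      simp [hcdef, hudef, hvdef]; push_cast; ring
    rw [hC, Complex.normSq_sub, Complex.normSq_mul, Complex.normSq_mul,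
      Complex.normSq_ofReal, Complex.normSq_ofReal, k2 0, k2 1, hcross 0 1]
    have key : a 0 ^ 2 * b 1 ^ 2 + a 1 ^ 2 * b 0 ^ 2 - (x 2 ^ 2 - x 0 ^ 2 - x 1 ^ 2) = m 2 2 := by
      rw [ha2 0, ha2 1, hb2 0, hb2 1, hx2 0, hx2 1, hx2 2, h22, h02, h12]; ring
    linear_combination key - r01
  have hcc : ∀ j, c j * (starRingEnd ℂ) (c j) = ((m 2 j : ℝ) : ℂ) := by
    intro j
    rw [Complex.mul_conj]
    norm_cast
    fin_cases j
    · exact hnc0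
    · exact hnc1
    · exact hnc2
  have huv : ∀ j, u j * (starRingEnd ℂ) (v j) = z j := by
    intro j
    simp only [hudef, hvdef]
    rw [_root_.map_mul, Complex.conj_ofReal, ← k4 j, hxab j]
    push_cast
    ring
  have hvu : ∀ j, v j * (starRingEnd ℂ) (u j) = (starRingEnd ℂ) (z j) := by
    intro j
    have := congrArg (starRingEnd ℂ) (huv j)
    rw [_root_.map_mul, Complex.conj_conj] at this
    rw [← this]; ring
  have hvv : ∀ j, v j * (starRingEnd ℂ) (v j) = ((m 1 j : ℝ) : ℂ) := by
    intro j
    rw [Complex.mul_conj]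
    norm_cast
    simp only [hvdef]
    rw [Complex.normSq_mul, Complex.normSq_ofReal, k2 j, ← hb2 j]
    ring
  have huu : ∀ j, u j * (starRingEnd ℂ) (u j) = ((m 0 j : ℝ) : ℂ) := by
    intro j
    rw [Complex.mul_conj]
    norm_cast
    simp only [hudef]
    rw [Complex.normSq_ofReal, ← ha2 j]
    ring
  have hzsum' : (starRingEnd ℂ) (z 0) + (starRingEnd ℂ) (z 1) = (starRingEnd ℂ) (z 2) := by
    rw [← map_add, hzsum]
  have hE0 : ((m 0 0 : ℝ) : ℂ) + ((m 0 1 : ℝ) : ℂ) - ((m 0 2 : ℝ) : ℂ) = 1 := by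
    exact_mod_cast e0
  have hE1 : ((m 1 0 : ℝ) : ℂ) + ((m 1 1 : ℝ) : ℂ) - ((m 1 2 : ℝ) : ℂ) = 1 := by
    exact_mod_cast e1
  have hE2 : ((m 2 0 : ℝ) : ℂ) + ((m 2 1 : ℝ) : ℂ) - ((m 2 2 : ℝ) : ℂ) = -1 := by
    have : m 2 0 + m 2 1 - m 2 2 = -1 := by linarith
    exact_mod_cast this
  set P : Matrix (Fin 3) (Fin 3) ℂ := Matrix.of ![u, v, w] with hPdef
  have hPJ : P * formJ * Pᴴ = formJ := by
    ext i k
    fin_cases i <;> fin_cases k <;>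
      simp [hPdef, formJ, Matrix.mul_apply, Matrix.conjTranspose_apply,
        Fin.sum_univ_three, Matrix.vecMul_diagonal, Matrix.diagonal_apply]
    · linear_combination huu 0 + huu 1 - huu 2 + hE0
    · linear_combination huv 0 + huv 1 - huv 2 + hzsum
    · simp [hwdef, hcdef, Matrix.cons_val_two, Matrix.tail_cons,
        map_neg, Complex.conj_conj, map_sub, _root_.map_mul]
      ring
    · linear_combination hvu 0 + hvu 1 - hvu 2 + hzsum'
    · linear_combination hvv 0 + hvv 1 - hvv 2 + hE1
    · simp [hwdef, hcdef, Matrix.cons_val_two, Matrix.tail_cons,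
        map_neg, Complex.conj_conj, map_sub, _root_.map_mul]
      ring
    · simp [hwdef, hcdef, Matrix.cons_val_two, Matrix.tail_cons,
        map_neg, Complex.conj_conj, map_sub, _root_.map_mul]
      ring
    · simp [hwdef, hcdef, Matrix.cons_val_two, Matrix.tail_cons,
        map_neg, Complex.conj_conj, map_sub, _root_.map_mul]
      ring
    · simp [hwdef, Matrix.cons_val_two, Matrix.tail_cons, map_neg, Complex.conj_conj,
        -Complex.mul_conj]
      linear_combination hcc 0 + hcc 1 - hcc 2 + hE2
  have hJJ : formJ * formJ = 1 := by
    ext i j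
    fin_cases i <;> fin_cases j <;>
      simp [formJ, Matrix.mul_apply, Fin.sum_univ_three, Matrix.diagonal_apply,
        Matrix.one_apply]
  have hdet : P.det = 1 := by
    have h1 : P.det = -(c 0 * (starRingEnd ℂ) (c 0)) - c 1 * (starRingEnd ℂ) (c 1)
        + c 2 * (starRingEnd ℂ) (c 2) := by
      rw [Matrix.det_fin_three]
      simp [hPdef, hwdef, hcdef, map_sub, _root_.map_mul]
      ring
    rw [h1, hcc 0, hcc 1, hcc 2]
    have h5 : -((m 2 0 : ℝ) : ℂ) - ((m 2 1 : ℝ) : ℂ) + ((m 2 2 : ℝ) : ℂ) = 1 := by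
      exact_mod_cast e2
    linear_combination h5
  have hfinal : Pᴴ * formJ * P = formJ := by
    have h2 : P * (formJ * Pᴴ * formJ) = 1 := by
      calc P * (formJ * Pᴴ * formJ) = P * formJ * Pᴴ * formJ := by
            simp only [Matrix.mul_assoc]
        _ = 1 := by rw [hPJ, hJJ]
    have h3 : formJ * Pᴴ * formJ * P = 1 := mul_eq_one_comm.mp h2
    calc Pᴴ * formJ * P = (formJ * formJ) * Pᴴ * formJ * P := by rw [hJJ, Matrix.one_mul]
      _ = formJ * (formJ * Pᴴ * formJ * P) := by simp only [Matrix.mul_assoc]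
      _ = formJ * 1 := by rw [h3]
      _ = formJ := Matrix.mul_one _
  have hnu : ∀ j, Complex.normSq (u j) = m 0 j := by
    intro j
    simp [hudef, Complex.normSq_ofReal]
    linear_combination ha2 j
  have hnv : ∀ j, Complex.normSq (v j) = m 1 j := by
    intro j
    simp [hvdef, Complex.normSq_mul, Complex.normSq_ofReal, k2 j]
    linear_combination hb2 j
  have hnw : ∀ j, Complex.normSq (w j) = m 2 j := by
    intro j
    fin_cases j
    · simpa [hwdef, Complex.normSq_conj] using hnc0
    · simpa [hwdef, Complex.normSq_conj] using hnc1
    · simpa [hwdef, Complex.normSq_conj] using hnc2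
  refine ⟨P, ⟨hdet, hfinal⟩, ?_⟩
  intro i j
  fin_cases i
  · exact (hnu j).symm
  · exact (hnv j).symm
  · exact (hnw j).symm
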